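/- Let p be a prime and let l, s, m be positive integers such that l divides s and p^l ≡ 1 (mod m). Let H be an additive subgroup of F_{p^s} that is closed under multiplication by elements of the subfield F_{p^l}, and let α_1, ..., α_m be the m distinct m-th roots of unity in F_{p^s}. Define g(x) = ∏_{i=1}^m ∏_{h∈H} (x + h + α_i). Then for every b ∈ F_{p^s}, g is constant on the set U = ∪_{i=1}^m (H + b·α_i), i.e., g(u) = g(b') for all u, b' ∈ U; moreover |U| = |H| if b ∈ H and |U| = m·|H| if b ∉ H. -/

import Mathlib

/-- Theorem on good polynomials combining the additive and multiplicative structure: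
let `p` be prime, `l ∣ s`, `p^l ≡ 1 (mod m)`, let `H` be an additive subgroup of the field
`F` with `p^s` elements that is closed under multiplication by the subfield `F_{p^l}`
(whose elements are exactly the `c` with `c^(p^l) = c`), and let `α 1, ..., α m` be the `m`
distinct `m`-th roots of unity.  Then `g(x) = ∏_{i=1}^m ∏_{h ∈ H} (x + h + α i)` is constant
on `U = ∪_i (H + b·α i)` for every `b`, and `|U| = |H|` if `b ∈ H` while `|U| = m·|H|`
if `b ∉ H`. -/
theorem stmt_7 {F : Type*} [Field F] [Fintype F] [DecidableEq F]
    (p l s m : ℕ) (hp : p.Prime) (hl : 0 < l) (hs : 0 < s) (hm : 0 < m)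
    (hls : l ∣ s) (hmod : p ^ l ≡ 1 [MOD m])
    (hcard : Fintype.card F = p ^ s)
    (H : AddSubgroup F) (Hs : Finset F) (hHs : ∀ x, x ∈ Hs ↔ x ∈ H)
    (hclosed : ∀ c : F, c ^ (p ^ l) = c → ∀ h ∈ H, c * h ∈ H)
    (α : Fin m → F) (hαinj : Function.Injective α) (hαroot : ∀ i, (α i) ^ m = 1)
    (b : F) (U : Finset F)
    (hU : ∀ u, u ∈ U ↔ ∃ i : Fin m, ∃ h ∈ H, u = h + b * α i)
    (g : F → F) (hg : ∀ x, g x = ∏ i : Fin m, ∏ h ∈ Hs, (x + h + α i)) :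
    (∀ u ∈ U, ∀ v ∈ U, g u = g v) ∧
    (b ∈ H → U.card = Hs.card) ∧
    (b ∉ H → U.card = m * Hs.card) := by
  classical
  -- basic arithmetic facts
  have hpl1 : (1 : ℕ) ≤ p ^ l := Nat.one_le_pow _ _ hp.pos
  have hdvd : m ∣ p ^ l - 1 := (Nat.modEq_iff_dvd' hpl1).mp hmod.symm
  -- every `m`-th root of unity lies in the subfield `F_{p^l}`
  have hfix : ∀ c : F, c ^ m = 1 → c ^ (p ^ l) = c := by
    intro c hc
    obtain ⟨k, hk⟩ := hdvd
    have h1 : c ^ (p ^ l - 1) = 1 := by rw [hk, pow_mul, hc, one_pow]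
    calc c ^ (p ^ l) = c ^ (p ^ l - 1 + 1) := by rw [Nat.sub_add_cancel hpl1]
      _ = c := by rw [pow_succ, h1, one_mul]
  have hne0 : ∀ c : F, c ^ m = 1 → c ≠ 0 := by
    intro c hc h0
    rw [h0, zero_pow hm.ne'] at hc
    exact zero_ne_one hc
  have hmulH : ∀ c : F, c ^ m = 1 → ∀ h ∈ H, c * h ∈ H :=
    fun c hc => hclosed c (hfix c hc)
  have hinvroot : ∀ c : F, c ^ m = 1 → (c⁻¹) ^ m = 1 := by
    intro c hc; rw [inv_pow, hc, inv_one]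
  -- the image of α is exactly the set of m-th roots of unity
  set S : Finset F := Finset.image α Finset.univ with hSdef
  have hScard : S.card = m := by
    rw [hSdef, Finset.card_image_of_injective _ hαinj, Finset.card_univ, Fintype.card_fin]
  have hSeq : S = Polynomial.nthRootsFinset m (1 : F) := by
    apply Finset.eq_of_subset_of_card_le
    · intro a ha
      rw [Polynomial.mem_nthRootsFinset hm]
      obtain ⟨i, _, rfl⟩ := Finset.mem_image.mp ha
      exact hαroot i
    · rw [hScard, Polynomial.nthRootsFinset_def]
      exact le_trans (Multiset.toFinset_card_le _) (Polynomial.card_nthRoots m 1)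
  have hSmem : ∀ a : F, a ∈ S ↔ a ^ m = 1 := by
    intro a; rw [hSeq, Polynomial.mem_nthRootsFinset hm]
  -- rewrite g as a product over S
  have hgS : ∀ x, g x = ∏ a ∈ S, ∏ h ∈ Hs, (x + h + a) := by
    intro x
    rw [hg x, hSdef, Finset.prod_image (fun i _ j _ h => hαinj h)]
  -- translation invariance of g
  have htrans : ∀ h0 ∈ H, ∀ y : F, g (h0 + y) = g y := by
    intro h0 hh0 y
    rw [hgS, hgS]
    refine Finset.prod_congr rfl fun a _ => ?_
    refine Finset.prod_bij' (fun h _ => h0 + h) (fun h _ => h - h0)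
      ?_ ?_ ?_ ?_ ?_
    · intro x hx; exact (hHs _).mpr (H.add_mem hh0 ((hHs x).mp hx))
    · intro x hx; exact (hHs _).mpr (H.sub_mem ((hHs x).mp hx) hh0)
    · intro x _; ring
    · intro x _; ring
    · intro x _; ring
  -- scaling invariance of g by m-th roots of unity
  have hscale : ∀ c : F, c ^ m = 1 → ∀ y : F, g (c * y) = g y := by
    intro c hc y
    have hc0 : c ≠ 0 := hne0 c hc
    have hcinv : (c⁻¹) ^ m = 1 := hinvroot c hc
    have hSbij : ∀ f : F → F, (∏ a ∈ S, f a) = ∏ a ∈ S, f (c * a) := by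
      intro f
      refine Finset.prod_bij' (fun a _ => c⁻¹ * a) (fun a _ => c * a) ?_ ?_ ?_ ?_ ?_
      · intro a ha
        rw [hSmem, mul_pow, hcinv, one_mul]; exact (hSmem a).mp ha
      · intro a ha
        rw [hSmem, mul_pow, hc, one_mul]; exact (hSmem a).mp ha
      · intro a _; field_simp
      · intro a _; field_simp
      · intro a _; rw [mul_inv_cancel_left₀ hc0]
    have hHbij : ∀ f : F → F, (∏ h ∈ Hs, f h) = ∏ h ∈ Hs, f (c * h) := by
      intro f
      refine Finset.prod_bij' (fun h _ => c⁻¹ * h) (fun h _ => c * h) ?_ ?_ ?_ ?_ ?_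
      · intro x hx
        exact (hHs _).mpr (hmulH _ hcinv x ((hHs x).mp hx))
      · intro x hx
        exact (hHs _).mpr (hmulH _ hc x ((hHs x).mp hx))
      · intro x _; field_simp
      · intro x _; field_simp
      · intro x _; rw [mul_inv_cancel_left₀ hc0]
    rw [hgS, hgS]
    calc ∏ a ∈ S, ∏ h ∈ Hs, (c * y + h + a)
        = ∏ a ∈ S, ∏ h ∈ Hs, (c * y + h + c * a) := hSbij _
      _ = ∏ a ∈ S, ∏ h ∈ Hs, (c * y + c * h + c * a) := Finset.prod_congr rfl fun a _ => hHbij _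
      _ = ∏ a ∈ S, ∏ h ∈ Hs, c * (y + h + a) := by
          refine Finset.prod_congr rfl fun a _ => Finset.prod_congr rfl fun h _ => by ring
      _ = ∏ a ∈ S, c ^ Hs.card * ∏ h ∈ Hs, (y + h + a) := by
          refine Finset.prod_congr rfl fun a _ => ?_
          rw [Finset.prod_mul_distrib, Finset.prod_const]
      _ = (c ^ Hs.card) ^ S.card * ∏ a ∈ S, ∏ h ∈ Hs, (y + h + a) := by
          rw [Finset.prod_mul_distrib, Finset.prod_const]
      _ = ∏ a ∈ S, ∏ h ∈ Hs, (y + h + a) := by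
          rw [hScard, ← pow_mul, mul_comm Hs.card m, pow_mul, hc, one_pow, one_mul]
  -- g is constant on U
  have i0 : Fin m := ⟨0, hm⟩
  have hkey : ∀ u ∈ U, g u = g (b * α i0) := by
    intro u hu
    obtain ⟨i, h, hh, rfl⟩ := (hU u).mp hu
    rw [htrans h hh]
    have hα00 : α i0 ≠ 0 := hne0 _ (hαroot i0)
    have hc : (α i * (α i0)⁻¹) ^ m = 1 := by
      rw [mul_pow, inv_pow, hαroot i, hαroot i0, inv_one, mul_one]
    have heq : b * α i = (α i * (α i0)⁻¹) * (b * α i0) := by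
      field_simp
    rw [heq, hscale _ hc]
  -- the characteristic of F is p
  have hchar : CharP F p := by
    obtain ⟨n, hrprime, hcard'⟩ := FiniteField.card F (ringChar F)
    have hpq : p = ringChar F := by
      have h1 : p ∣ ringChar F ^ (n : ℕ) := by
        rw [← hcard', hcard]
        exact dvd_pow_self p hs.ne'
      exact (Nat.prime_dvd_prime_iff_eq hp hrprime).mp (hp.dvd_of_dvd_pow h1)
    rw [hpq]
    exact ringChar.charP F
  haveI := hchar
  haveI : Fact p.Prime := ⟨hp⟩
  refine ⟨fun u hu v hv => (hkey u hu).trans (hkey v hv).symm, ?_, ?_⟩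
  · -- b ∈ H : U = Hs
    intro hb
    have hUeq : U = Hs := by
      ext x
      rw [hU, hHs]
      constructor
      · rintro ⟨i, h, hh, rfl⟩
        have hbα : b * α i ∈ H := by
          have := hclosed (α i) (hfix _ (hαroot i)) b hb
          rwa [mul_comm] at this
        exact H.add_mem hh hbα
      · intro hx
        refine ⟨i0, x - b * α i0, ?_, by ring⟩
        have hbα : b * α i0 ∈ H := by
          have := hclosed (α i0) (hfix _ (hαroot i0)) b hb
          rwa [mul_comm] at this
        exact H.sub_mem hx hbα
    rw [hUeq]
  · -- b ∉ H : the cosets are pairwise disjoint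
    intro hb
    have hUeq : U = Finset.univ.biUnion (fun i : Fin m => Hs.image (fun h => h + b * α i)) := by
      ext x
      simp only [Finset.mem_biUnion, Finset.mem_univ, Finset.mem_image, true_and, hU x, hHs]
      constructor
      · rintro ⟨i, h, hh, rfl⟩; exact ⟨i, h, hh, rfl⟩
      · rintro ⟨i, h, hh, rfl⟩; exact ⟨i, h, hh, rfl⟩
    have hdisj : ∀ i ∈ (Finset.univ : Finset (Fin m)), ∀ j ∈ (Finset.univ : Finset (Fin m)),
        i ≠ j → Disjoint (Hs.image (fun h => h + b * α i)) (Hs.image (fun h => h + b * α j)) := by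
      intro i _ j _ hij
      rw [Finset.disjoint_left]
      rintro x hx1 hx2
      obtain ⟨h1, hh1, rfl⟩ := Finset.mem_image.mp hx1
      obtain ⟨h2, hh2, heq⟩ := Finset.mem_image.mp hx2
      have hd0 : α i - α j ≠ 0 := sub_ne_zero.mpr fun h => hij (hαinj h)
      have hbd : b * (α i - α j) ∈ H := by
        have h3 : b * (α i - α j) = h2 - h1 := by linear_combination -heq
        rw [h3]
        exact H.sub_mem ((hHs h2).mp hh2) ((hHs h1).mp hh1)
      have hdfix : (α i - α j) ^ (p ^ l) = α i - α j := by
        rw [sub_pow_char_pow, hfix _ (hαroot i), hfix _ (hαroot j)]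
      have hdinvfix : ((α i - α j)⁻¹) ^ (p ^ l) = (α i - α j)⁻¹ := by
        rw [inv_pow, hdfix]
      have hbH : (α i - α j)⁻¹ * (b * (α i - α j)) ∈ H := hclosed _ hdinvfix _ hbd
      rw [mul_comm b, ← mul_assoc, inv_mul_cancel₀ hd0, one_mul] at hbH
      exact hb hbH
    rw [hUeq, Finset.card_biUnion hdisj]
    have himg : ∀ i : Fin m, (Hs.image (fun h => h + b * α i)).card = Hs.card := by
      intro i
      exact Finset.card_image_of_injective _ (add_left_injective _)
    rw [Finset.sum_congr rfl fun i _ => himg i]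
    rw [Finset.sum_const, Finset.card_univ, Fintype.card_fin, smul_eq_mul]
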